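/- Let M, m, n be integers with 1 ≤ m < n ≤ M and let c > 0 (c plays the role of ϖ₂ = (1−2a_n²)/a_n⁴). Set ϖ₁ = M!/((m−1)!(n−1−m)!(M−n)!), ϖ₄ = √(1+c) − 1, f(x) = (1/ρ)e^{−x/ρ}, F(x) = 1 − e^{−x/ρ}, and define Q₁(ρ) = ϖ₁·Σ_{i=0}^{n−1−m} C(n−1−m, i)·((−1)^i/(m+i))·∫_{ϖ₄}^{c} f(y)·F(y)^{n−1−m−i}·(1−F(y))^{M−n}·[F(y)^{m+i} − F((c−y)/(1+y))^{m+i}] dy. Then lim_{ρ→∞} ρ^n·Q₁(ρ) = ϖ₁·ϖ, where ϖ = Σ_{i=0}^{n−1−m} C(n−1−m, i)·((−1)^i/(m+i))·∫_{ϖ₄}^{c} y^{n−1−m−i}·[y^{m+i} − ((c−y)/(1+y))^{m+i}] dy. -/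

import Mathlib

open Filter

/-- The density `f(x) = (1/ρ)e^{−x/ρ}` of an exponential variable with mean `ρ`. -/
noncomputable def expDens (ρ x : ℝ) : ℝ := (1 / ρ) * Real.exp (-x / ρ)

/-- The CDF `F(x) = 1 − e^{−x/ρ}` of an exponential variable with mean `ρ`. -/
noncomputable def expCDF (ρ x : ℝ) : ℝ := 1 - Real.exp (-x / ρ)

/-- `ϖ₁ = M!/((m−1)!(n−1−m)!(M−n)!)`. -/
noncomputable def w1 (M m n : ℕ) : ℝ :=
  (M.factorial : ℝ) /
    (((m - 1).factorial : ℝ) * ((n - 1 - m).factorial : ℝ) * ((M - n).factorial : ℝ))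

lemma expCDF_nonneg (ρ x : ℝ) (hx : 0 ≤ x) (hρ : 0 < ρ) : 0 ≤ expCDF ρ x := by
  simp only [expCDF, sub_nonneg]
  apply Real.exp_le_one_iff.mpr
  have : -x / ρ = -(x / ρ) := by ring
  rw [this]
  exact neg_nonpos.mpr (div_nonneg hx hρ.le)

lemma expCDF_le (ρ x : ℝ) (hρ : 0 < ρ) : expCDF ρ x ≤ x / ρ := by
  have h := Real.add_one_le_exp (-x / ρ)
  have h2 : -x / ρ = -(x / ρ) := by ring
  rw [h2] at h
  simp only [expCDF, h2]
  linarith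

lemma expCDF_mono (ρ : ℝ) (hρ : 0 < ρ) {x y : ℝ} (h : x ≤ y) : expCDF ρ x ≤ expCDF ρ y := by
  simp only [expCDF]
  have hxy : -y / ρ ≤ -x / ρ := by
    gcongr <;> linarith
  have := Real.exp_le_exp.mpr hxy
  linarith

lemma tendsto_mul_expCDF (x : ℝ) :
    Tendsto (fun ρ : ℝ => ρ * expCDF ρ x) atTop (nhds x) := by
  have hd : HasDerivAt (fun u : ℝ => 1 - Real.exp (-(x * u))) x 0 := by
    have h1 : HasDerivAt (fun u : ℝ => -(x * u)) (-x) 0 := by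
      simpa using ((hasDerivAt_id (0 : ℝ)).const_mul x).fun_neg
    have h2 := h1.exp
    simpa using h2.const_sub 1
  rw [hasDerivAt_iff_tendsto_slope] at hd
  have hinv : Tendsto (fun ρ : ℝ => ρ⁻¹) atTop (nhdsWithin 0 {(0 : ℝ)}ᶜ) :=
    tendsto_inv_atTop_nhdsGT_zero.mono_right
      (nhdsWithin_mono _ (fun u hu => ne_of_gt (Set.mem_Ioi.mp hu)))
  refine (hd.comp hinv).congr' ?_
  filter_upwards [eventually_gt_atTop (0 : ℝ)] with ρ hρ
  have hρ' : ρ ≠ 0 := hρ.ne'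
  simp only [Function.comp, slope_def_field, expCDF]
  rw [show -(x * ρ⁻¹) = -x / ρ by ring]
  simp only [mul_zero, neg_zero, Real.exp_zero, sub_self, sub_zero]
  field_simp

lemma tendsto_exp_neg_div (y : ℝ) :
    Tendsto (fun ρ : ℝ => Real.exp (-y / ρ)) atTop (nhds 1) := by
  have h : Tendsto (fun ρ : ℝ => -y / ρ) atTop (nhds 0) :=
    tendsto_const_nhds.div_atTop tendsto_id
  have := (Real.continuous_exp.tendsto 0).comp h
  simpa [Function.comp_def] using this

lemma expr_eq (p q Mn : ℕ) (ρ y z : ℝ) (hρ : ρ ≠ 0) :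
    ρ ^ (1 + p + q) * (expDens ρ y * (expCDF ρ y) ^ p * (1 - expCDF ρ y) ^ Mn *
        ((expCDF ρ y) ^ q - (expCDF ρ z) ^ q)) =
      (Real.exp (-y / ρ)) ^ (Mn + 1) * (ρ * expCDF ρ y) ^ p *
        ((ρ * expCDF ρ y) ^ q - (ρ * expCDF ρ z) ^ q) := by
  have h : (1 : ℝ) - expCDF ρ y = Real.exp (-y / ρ) := by simp [expCDF]
  rw [h]
  simp only [expDens, mul_pow, pow_add]
  field_simp

lemma key_tendsto (p q Mn : ℕ) (c : ℝ) (hc : 0 < c) :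
    Tendsto (fun ρ : ℝ => ∫ y in (Real.sqrt (1 + c) - 1)..c,
        ρ ^ (1 + p + q) * (expDens ρ y * (expCDF ρ y) ^ p * (1 - expCDF ρ y) ^ Mn *
          ((expCDF ρ y) ^ q - (expCDF ρ ((c - y) / (1 + y))) ^ q)))
      atTop
      (nhds (∫ y in (Real.sqrt (1 + c) - 1)..c,
        y ^ p * (y ^ q - ((c - y) / (1 + y)) ^ q))) := by
  set a := Real.sqrt (1 + c) - 1 with ha_def
  have hs : Real.sqrt (1 + c) ^ 2 = 1 + c := Real.sq_sqrt (by linarith)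
  have hsn : 0 ≤ Real.sqrt (1 + c) := Real.sqrt_nonneg _
  have ha0 : 0 < a := by
    have : 1 < Real.sqrt (1 + c) := by nlinarith
    simp only [ha_def]; linarith
  have hac : a < c := by
    have : Real.sqrt (1 + c) < c + 1 := by nlinarith
    simp only [ha_def]; linarith
  have haq : a ^ 2 + 2 * a = c := by simp only [ha_def]; nlinarith
  have huIoc : Set.uIoc a c = Set.Ioc a c := Set.uIoc_of_le hac.le
  -- facts for y in the interval
  have hy_facts : ∀ y ∈ Set.uIoc a c, 0 < y ∧ y ≤ c ∧
      0 ≤ (c - y) / (1 + y) ∧ (c - y) / (1 + y) ≤ y := by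
    intro y hy
    rw [huIoc] at hy
    obtain ⟨hy1, hy2⟩ := hy
    have hy0 : 0 < y := lt_trans ha0 hy1
    have h1y : 0 < 1 + y := by linarith
    refine ⟨hy0, hy2, div_nonneg (by linarith) h1y.le, ?_⟩
    rw [div_le_iff₀ h1y]
    nlinarith
  apply intervalIntegral.tendsto_integral_filter_of_dominated_convergence
    (fun _ => c ^ (p + q))
  · -- measurability
    filter_upwards with ρ
    have hcd : ContinuousOn (fun y : ℝ => (c - y) / (1 + y)) (Set.uIoc a c) := by
      apply ContinuousOn.div (Continuous.continuousOn (by fun_prop))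
        (Continuous.continuousOn (by fun_prop))
      intro y hy
      have := (hy_facts y hy).1
      intro h
      linarith
    have hF : Continuous (expCDF ρ) := by unfold expCDF; fun_prop
    have hD : Continuous (expDens ρ) := by unfold expDens; fun_prop
    apply ContinuousOn.aestronglyMeasurable ?_ measurableSet_uIoc
    apply ContinuousOn.mul continuousOn_const
    apply ContinuousOn.mul
    apply ContinuousOn.mul
    apply ContinuousOn.mul hD.continuousOn (hF.continuousOn.pow p)
    · exact ((continuousOn_const.sub hF.continuousOn).pow Mn)
    · exact (hF.continuousOn.pow q).sub ((hF.comp_continuousOn hcd).pow q)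
  · -- bound
    filter_upwards [eventually_gt_atTop (0 : ℝ)] with ρ hρ
    filter_upwards with y hy
    obtain ⟨hy0, hyc, hz0, hzy⟩ := hy_facts y hy
    set z := (c - y) / (1 + y) with hz_def
    rw [expr_eq p q Mn ρ y z hρ.ne']
    have he0 : (0 : ℝ) ≤ Real.exp (-y / ρ) := (Real.exp_pos _).le
    have he1 : Real.exp (-y / ρ) ≤ 1 := by
      apply Real.exp_le_one_iff.mpr
      have : -y / ρ = -(y / ρ) := by ring
      rw [this]
      exact neg_nonpos.mpr (div_nonneg hy0.le hρ.le)
    have hu0 : 0 ≤ ρ * expCDF ρ y := mul_nonneg hρ.le (expCDF_nonneg ρ y hy0.le hρ)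
    have hv0 : 0 ≤ ρ * expCDF ρ z := mul_nonneg hρ.le (expCDF_nonneg ρ z hz0 hρ)
    have hvu : ρ * expCDF ρ z ≤ ρ * expCDF ρ y :=
      mul_le_mul_of_nonneg_left (expCDF_mono ρ hρ hzy) hρ.le
    have huy : ρ * expCDF ρ y ≤ y := by
      have := expCDF_le ρ y hρ
      calc ρ * expCDF ρ y ≤ ρ * (y / ρ) := mul_le_mul_of_nonneg_left this hρ.le
        _ = y := by field_simp
    have hsubnn : 0 ≤ (ρ * expCDF ρ y) ^ q - (ρ * expCDF ρ z) ^ q :=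
      sub_nonneg.mpr (pow_le_pow_left₀ hv0 hvu q)
    have hnn : 0 ≤ (Real.exp (-y / ρ)) ^ (Mn + 1) * (ρ * expCDF ρ y) ^ p *
        ((ρ * expCDF ρ y) ^ q - (ρ * expCDF ρ z) ^ q) :=
      mul_nonneg (mul_nonneg (pow_nonneg he0 _) (pow_nonneg hu0 _)) hsubnn
    rw [Real.norm_eq_abs, abs_of_nonneg hnn]
    have hstep : (Real.exp (-y / ρ)) ^ (Mn + 1) * (ρ * expCDF ρ y) ^ p *
        ((ρ * expCDF ρ y) ^ q - (ρ * expCDF ρ z) ^ q) ≤ 1 * y ^ p * y ^ q := by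
      apply mul_le_mul
      · apply mul_le_mul
        · exact pow_le_one₀ he0 he1
        · exact pow_le_pow_left₀ hu0 huy p
        · exact pow_nonneg hu0 p
        · exact zero_le_one
      · calc (ρ * expCDF ρ y) ^ q - (ρ * expCDF ρ z) ^ q
            ≤ (ρ * expCDF ρ y) ^ q := sub_le_self _ (pow_nonneg hv0 q)
          _ ≤ y ^ q := pow_le_pow_left₀ hu0 huy q
      · exact hsubnn
      · positivity
    calc (Real.exp (-y / ρ)) ^ (Mn + 1) * (ρ * expCDF ρ y) ^ p *
        ((ρ * expCDF ρ y) ^ q - (ρ * expCDF ρ z) ^ q)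
        ≤ 1 * y ^ p * y ^ q := hstep
      _ = y ^ (p + q) := by rw [one_mul, pow_add]
      _ ≤ c ^ (p + q) := pow_le_pow_left₀ hy0.le hyc _
  · exact intervalIntegrable_const
  · -- pointwise limit
    filter_upwards with y hy
    obtain ⟨hy0, hyc, hz0, hzy⟩ := hy_facts y hy
    set z := (c - y) / (1 + y) with hz_def
    have hu := tendsto_mul_expCDF y
    have hv := tendsto_mul_expCDF z
    have he := tendsto_exp_neg_div y
    have hlim := ((he.pow (Mn + 1)).mul (hu.pow p)).mul ((hu.pow q).sub (hv.pow q))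
    rw [one_pow, one_mul] at hlim
    refine hlim.congr' ?_
    filter_upwards [eventually_gt_atTop (0 : ℝ)] with ρ hρ
    exact (expr_eq p q Mn ρ y z hρ.ne').symm

/-- High-SNR behavior of the double-integral term `Q₁(ρ)` of
Theorem 1: with `1 ≤ m < n ≤ M`, `c > 0`, `ϖ₄ = √(1+c) − 1`,
`Q₁(ρ) = ϖ₁ Σ_{i=0}^{n−1−m} C(n−1−m,i)((−1)^i/(m+i)) ∫_{ϖ₄}^{c}
  f(y)F(y)^{n−1−m−i}(1−F(y))^{M−n}(F(y)^{m+i} − F((c−y)/(1+y))^{m+i}) dy`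
satisfies `ρ^n Q₁(ρ) → ϖ₁·ϖ` as `ρ → ∞`, where
`ϖ = Σ_{i=0}^{n−1−m} C(n−1−m,i)((−1)^i/(m+i)) ∫_{ϖ₄}^{c}
  y^{n−1−m−i}(y^{m+i} − ((c−y)/(1+y))^{m+i}) dy`. -/
theorem q1_high_snr (M m n : ℕ) (hm : 1 ≤ m) (hmn : m < n) (hnM : n ≤ M)
    (c : ℝ) (hc : 0 < c) :
    Tendsto (fun ρ : ℝ =>
        ρ ^ n * (w1 M m n *
          ∑ i ∈ Finset.range (n - m),
            ((n - 1 - m).choose i : ℝ) * ((-1) ^ i / ((m : ℝ) + i)) *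
              ∫ y in (Real.sqrt (1 + c) - 1)..c,
                expDens ρ y * (expCDF ρ y) ^ (n - 1 - m - i) *
                  (1 - expCDF ρ y) ^ (M - n) *
                  ((expCDF ρ y) ^ (m + i) - (expCDF ρ ((c - y) / (1 + y))) ^ (m + i))))
      atTop
      (nhds (w1 M m n *
        ∑ i ∈ Finset.range (n - m),
          ((n - 1 - m).choose i : ℝ) * ((-1) ^ i / ((m : ℝ) + i)) *
            ∫ y in (Real.sqrt (1 + c) - 1)..c,
              y ^ (n - 1 - m - i) * (y ^ (m + i) - ((c - y) / (1 + y)) ^ (m + i)))) := by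
  have hmain : Tendsto (fun ρ : ℝ =>
      w1 M m n * ∑ i ∈ Finset.range (n - m),
        ((n - 1 - m).choose i : ℝ) * ((-1) ^ i / ((m : ℝ) + i)) *
          ∫ y in (Real.sqrt (1 + c) - 1)..c,
            ρ ^ n * (expDens ρ y * (expCDF ρ y) ^ (n - 1 - m - i) *
              (1 - expCDF ρ y) ^ (M - n) *
              ((expCDF ρ y) ^ (m + i) - (expCDF ρ ((c - y) / (1 + y))) ^ (m + i))))
      atTop
      (nhds (w1 M m n *
        ∑ i ∈ Finset.range (n - m),
          ((n - 1 - m).choose i : ℝ) * ((-1) ^ i / ((m : ℝ) + i)) *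
            ∫ y in (Real.sqrt (1 + c) - 1)..c,
              y ^ (n - 1 - m - i) * (y ^ (m + i) - ((c - y) / (1 + y)) ^ (m + i)))) := by
    apply Tendsto.const_mul
    apply tendsto_finset_sum
    intro i hi
    apply Tendsto.const_mul
    have hin : i < n - m := Finset.mem_range.mp hi
    have hn : 1 + (n - 1 - m - i) + (m + i) = n := by omega
    simpa only [hn] using key_tendsto (n - 1 - m - i) (m + i) (M - n) c hc
  refine hmain.congr fun ρ => ?_
  simp only [intervalIntegral.integral_const_mul]
  have : ∑ i ∈ Finset.range (n - m),
      ((n - 1 - m).choose i : ℝ) * ((-1) ^ i / ((m : ℝ) + i)) *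
        (ρ ^ n * ∫ y in (Real.sqrt (1 + c) - 1)..c,
          expDens ρ y * (expCDF ρ y) ^ (n - 1 - m - i) *
            (1 - expCDF ρ y) ^ (M - n) *
            ((expCDF ρ y) ^ (m + i) - (expCDF ρ ((c - y) / (1 + y))) ^ (m + i)))
      = ρ ^ n * ∑ i ∈ Finset.range (n - m),
        ((n - 1 - m).choose i : ℝ) * ((-1) ^ i / ((m : ℝ) + i)) *
          ∫ y in (Real.sqrt (1 + c) - 1)..c,
            expDens ρ y * (expCDF ρ y) ^ (n - 1 - m - i) *
              (1 - expCDF ρ y) ^ (M - n) *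
              ((expCDF ρ y) ^ (m + i) - (expCDF ρ ((c - y) / (1 + y))) ^ (m + i)) := by
    rw [Finset.mul_sum]
    exact Finset.sum_congr rfl fun i _ => by ring
  rw [this]
  ring
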